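/- arXiv:2509.16156 — 2 statements merged into one kernel-verified Lean document; each statement's English description precedes it below -/
import Mathlib

section
/- Let Q be a real symmetric traceless 3×3 matrix, and consider the function ω : S² → ℝ on the unit sphere S² ⊂ ℝ³ given by ω(x) = xᵀQx. Assume ω is normalized in L², i.e. ∫_{S²} ω(x)² dS = 1. Then there exist a rotation R ∈ SO(3) and real numbers A, B with A² + B² = 1 and 3/7 ≤ A² such that for every x ∈ S² one has ω(Rx) = A·Y_{2,0}(x) + B·Y_{2,2}(x). -/
open Real Matrix

/-- The point of the unit sphere `S² ⊂ ℝ³` with spherical coordinates `(θ, φ)`. -/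
noncomputable def sphPoint (θ φ : ℝ) : Fin 3 → ℝ :=
  ![Real.sin θ * Real.cos φ, Real.sin θ * Real.sin φ, Real.cos θ]

/-- The real spherical harmonic `Y_{2,0}` in Cartesian coordinates. -/
noncomputable def Y20 (x : Fin 3 → ℝ) : ℝ :=
  Real.sqrt (5 / (16 * π)) * (3 * (x 2) ^ 2 - 1)

/-- The real spherical harmonic `Y_{2,2}` in Cartesian coordinates. -/
noncomputable def Y22 (x : Fin 3 → ℝ) : ℝ :=
  Real.sqrt (15 / (16 * π)) * ((x 0) ^ 2 - (x 1) ^ 2)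

section Integrals

open intervalIntegral

lemma I_s5 : ∫ θ in (0:ℝ)..π, sin θ ^ 5 = 16/15 := by
  have := integral_sin_pow_odd (n := 2)
  norm_num [Finset.prod_range_succ] at this
  linarith

lemma I_s4c : ∫ θ in (0:ℝ)..π, sin θ ^ 4 * cos θ = 0 := by
  have := integral_sin_pow_mul_cos_pow_odd (a := 0) (b := π) 4 0
  norm_num [Real.sin_pi] at this
  exact this

lemma I_s3c2 : ∫ θ in (0:ℝ)..π, sin θ ^ 3 * cos θ ^ 2 = 4/15 := by
  have h := integral_sin_pow_odd_mul_cos_pow (a := 0) (b := π) 1 2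
  norm_num [Real.cos_pi] at h
  rw [h]
  have h2 : (∫ u in (-1:ℝ)..1, u ^ 2 * (1 - u ^ 2)) = ∫ u in (-1:ℝ)..1, (u^2 - u^4) := by
    apply integral_congr; intro u _; ring
  rw [h2, integral_sub ((continuous_pow 2).intervalIntegrable _ _)
    ((continuous_pow 4).intervalIntegrable _ _), integral_pow, integral_pow]
  norm_num

lemma I_s2c3 : ∫ θ in (0:ℝ)..π, sin θ ^ 2 * cos θ ^ 3 = 0 := by
  have := integral_sin_pow_mul_cos_pow_odd (a := 0) (b := π) 2 1
  norm_num [Real.sin_pi] at this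
  exact this

lemma I_sc4 : ∫ θ in (0:ℝ)..π, sin θ * cos θ ^ 4 = 2/5 := by
  have h := integral_sin_pow_odd_mul_cos_pow (a := 0) (b := π) 0 4
  norm_num [Real.cos_pi] at h
  exact h

lemma J_c4 : ∫ φ in (0:ℝ)..(2*π), cos φ ^ 4 = 3*π/4 := by
  have h := integral_cos_pow (a := 0) (b := 2*π) 2
  norm_num [Real.sin_two_pi, Real.cos_two_pi] at h ⊢
  rw [h]; ring

lemma J_s4 : ∫ φ in (0:ℝ)..(2*π), sin φ ^ 4 = 3*π/4 := by
  have h := integral_sin_pow (a := 0) (b := 2*π) 2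
  norm_num [Real.sin_two_pi, Real.cos_two_pi] at h ⊢
  rw [h]; ring

lemma J_c2s2 : ∫ φ in (0:ℝ)..(2*π), cos φ ^ 2 * sin φ ^ 2 = π/4 := by
  have h := integral_sin_sq_mul_cos_sq (a := 0) (b := 2*π)
  have h8 : Real.sin (4*(2*π)) = 0 := by
    have e : (4:ℝ)*(2*π) = ((8:ℕ):ℝ)*π := by push_cast; ring
    rw [e, Real.sin_nat_mul_pi]
  rw [show (fun φ => cos φ ^ 2 * sin φ ^ 2) = fun φ => sin φ ^ 2 * cos φ ^ 2 from by
    funext x; ring, h, h8]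
  norm_num; ring

lemma J_c3s : ∫ φ in (0:ℝ)..(2*π), cos φ ^ 3 * sin φ = 0 := by
  have h := integral_sin_pow_odd_mul_cos_pow (a := 0) (b := 2*π) 0 3
  norm_num [Real.cos_two_pi] at h
  rw [show (fun φ => cos φ ^ 3 * sin φ) = fun φ => sin φ * cos φ ^ 3 from by funext x; ring]
  exact h

lemma J_cs3 : ∫ φ in (0:ℝ)..(2*π), cos φ * sin φ ^ 3 = 0 := by
  have h := integral_sin_pow_odd_mul_cos_pow (a := 0) (b := 2*π) 1 1
  norm_num [Real.cos_two_pi] at h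
  rw [show (fun φ => cos φ * sin φ ^ 3) = fun φ => sin φ ^ 3 * cos φ from by funext x; ring]
  exact h

lemma J_c2 : ∫ φ in (0:ℝ)..(2*π), cos φ ^ 2 = π := by
  rw [integral_cos_sq]
  norm_num [Real.sin_two_pi, Real.cos_two_pi]

lemma J_s2 : ∫ φ in (0:ℝ)..(2*π), sin φ ^ 2 = π := by
  rw [integral_sin_sq]
  norm_num [Real.sin_two_pi, Real.cos_two_pi]

lemma J_cs : ∫ φ in (0:ℝ)..(2*π), cos φ * sin φ = 0 := by
  rw [show (fun φ => cos φ * sin φ) = fun φ => sin φ * cos φ from by funext x; ring]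
  rw [integral_sin_mul_cos₁]
  norm_num [Real.sin_two_pi]

lemma J_one : ∫ _ in (0:ℝ)..(2*π), (1:ℝ) = 2*π := by
  simp

lemma inner_int (k1 k2 k3 k4 k5 : ℝ) :
    (∫ θ in (0:ℝ)..π, (k1 * sin θ ^ 5 + k2 * (sin θ ^ 4 * cos θ) + k3 * (sin θ ^ 3 * cos θ ^ 2)
      + k4 * (sin θ ^ 2 * cos θ ^ 3) + k5 * (sin θ * cos θ ^ 4)))
    = 16/15 * k1 + 4/15 * k3 + 2/5 * k5 := by
  rw [integral_add, integral_add, integral_add, integral_add]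
  · rw [integral_const_mul, integral_const_mul, integral_const_mul, integral_const_mul,
      integral_const_mul, I_s5, I_s4c, I_s3c2, I_s2c3, I_sc4]
    ring
  all_goals apply Continuous.intervalIntegrable; fun_prop

lemma outer_int (m1 m2 m3 m4 m5 m6 m7 m8 m9 : ℝ) :
    (∫ φ in (0:ℝ)..(2*π), (m1 * cos φ ^ 4 + m2 * sin φ ^ 4 + m3 * (cos φ ^ 2 * sin φ ^ 2)
      + m4 * (cos φ ^ 3 * sin φ) + m5 * (cos φ * sin φ ^ 3) + m6 * cos φ ^ 2 + m7 * sin φ ^ 2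
      + m8 * (cos φ * sin φ) + m9))
    = 3*π/4 * (m1 + m2) + π/4 * m3 + π * (m6 + m7) + 2*π*m9 := by
  rw [integral_add, integral_add, integral_add, integral_add, integral_add, integral_add,
    integral_add, integral_add]
  · rw [integral_const_mul, integral_const_mul, integral_const_mul, integral_const_mul,
      integral_const_mul, integral_const_mul, integral_const_mul, integral_const_mul,
      J_c4, J_s4, J_c2s2, J_c3s, J_cs3, J_c2, J_s2, J_cs]
    rw [show (fun _ : ℝ => m9) = fun _ : ℝ => m9 * 1 from by funext x; ring, integral_const_mul,
      J_one]
    ring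
  all_goals apply Continuous.intervalIntegrable; fun_prop

end Integrals

lemma quadform (M P : Matrix (Fin 3) (Fin 3) ℝ) (x : Fin 3 → ℝ) :
    (M *ᵥ x) ⬝ᵥ (P *ᵥ (M *ᵥ x)) = x ⬝ᵥ ((Mᵀ * P * M) *ᵥ x) := by
  have e3 : ∀ u, x ⬝ᵥ (Mᵀ *ᵥ u) = (M *ᵥ x) ⬝ᵥ u := fun u => by
    rw [Matrix.dotProduct_mulVec, Matrix.vecMul_transpose]
  calc (M *ᵥ x) ⬝ᵥ (P *ᵥ (M *ᵥ x)) = (M *ᵥ x) ⬝ᵥ ((P * M) *ᵥ x) := by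
        rw [Matrix.mulVec_mulVec]
    _ = x ⬝ᵥ (Mᵀ *ᵥ ((P * M) *ᵥ x)) := (e3 _).symm
    _ = x ⬝ᵥ ((Mᵀ * P * M) *ᵥ x) := by rw [Matrix.mulVec_mulVec, ← Matrix.mul_assoc]

lemma core (Q V : Matrix (Fin 3) (Fin 3) ℝ) (ν : Fin 3 → ℝ)
    (hV : Vᵀ * V = 1) (hVQ : Vᵀ * Q * V = diagonal ν)
    (htr : ν 0 + ν 1 + ν 2 = 0) (hsum : 8*π*(ν 0^2 + ν 1^2 + ν 2^2) = 15)
    (hmax0 : ν 0^2 ≤ ν 2^2) (hmax1 : ν 1^2 ≤ ν 2^2) :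
    ∃ R : Matrix (Fin 3) (Fin 3) ℝ, Rᵀ * R = 1 ∧ R.det = 1 ∧
      ∃ A B : ℝ, A ^ 2 + B ^ 2 = 1 ∧ 3 / 7 ≤ A ^ 2 ∧
        ∀ x : Fin 3 → ℝ, (x 0) ^ 2 + (x 1) ^ 2 + (x 2) ^ 2 = 1 →
          (R.mulVec x) ⬝ᵥ Q.mulVec (R.mulVec x) = A * Y20 x + B * Y22 x := by
  have hπ := Real.pi_pos
  set s := V.det with hs
  have hs2 : s ^ 2 = 1 := by
    have h := congrArg Matrix.det hV
    rwa [Matrix.det_mul, Matrix.det_transpose, Matrix.det_one, ← sq] at h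
  set F : Matrix (Fin 3) (Fin 3) ℝ := diagonal ![s, 1, 1] with hF
  have hFT : Fᵀ = F := Matrix.diagonal_transpose _
  have hFF : F * F = 1 := by
    rw [hF, Matrix.diagonal_mul_diagonal]
    ext i j
    fin_cases i <;> fin_cases j <;>
      simp [Matrix.diagonal, Matrix.one_apply, Matrix.vecHead, Matrix.vecTail, hs2] <;>
      linear_combination hs2
  refine ⟨V * F, ?_, ?_, ?_⟩
  · rw [Matrix.transpose_mul, hFT, Matrix.mul_assoc, ← Matrix.mul_assoc Vᵀ, hV,
      Matrix.one_mul, hFF]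
  · rw [Matrix.det_mul, hF, Matrix.det_diagonal, Fin.prod_univ_three]
    simp [Matrix.vecHead, Matrix.vecTail]
    linear_combination hs2
  · have hform : (V*F)ᵀ * Q * (V*F) = diagonal ν := by
      rw [Matrix.transpose_mul, hFT]
      calc F * Vᵀ * Q * (V * F) = F * (Vᵀ * Q * V) * F := by simp only [Matrix.mul_assoc]
        _ = F * diagonal ν * F := by rw [hVQ]
        _ = diagonal ν := by
            rw [hF, Matrix.diagonal_mul_diagonal, Matrix.diagonal_mul_diagonal]
            ext i j
            fin_cases i <;> fin_cases j <;>
              simp [Matrix.diagonal, Matrix.vecHead, Matrix.vecTail] <;>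
              linear_combination ν 0 * hs2
    set R := V * F with hR
    have h1 : Real.sqrt (π/5) * Real.sqrt (5/(16*π)) = 1/4 := by
      rw [← Real.sqrt_mul (by positivity)]
      rw [show π/5 * (5/(16*π)) = 1/16 by field_simp]
      rw [show (1/16 : ℝ) = (1/4)^2 by norm_num, Real.sqrt_sq (by norm_num)]
    have h2 : Real.sqrt (π/15) * Real.sqrt (15/(16*π)) = 1/4 := by
      rw [← Real.sqrt_mul (by positivity)]
      rw [show π/15 * (15/(16*π)) = 1/16 by field_simp]
      rw [show (1/16 : ℝ) = (1/4)^2 by norm_num, Real.sqrt_sq (by norm_num)]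
    refine ⟨2 * ν 2 * Real.sqrt (π/5), 2 * (ν 0 - ν 1) * Real.sqrt (π/15), ?_, ?_, ?_⟩
    · have e1 : (2 * ν 2 * Real.sqrt (π/5))^2 = 4 * (π/5) * ν 2 ^2 := by
        rw [mul_pow, mul_pow, Real.sq_sqrt (by positivity)]; ring
      have e2 : (2 * (ν 0 - ν 1) * Real.sqrt (π/15))^2 = 4 * (π/15) * (ν 0 - ν 1)^2 := by
        rw [mul_pow, mul_pow, Real.sq_sqrt (by positivity)]; ring
      rw [e1, e2]
      linear_combination (1/15) * hsum + (4*π/15) * (ν 2 - ν 0 - ν 1) * htr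
    · have e1 : (2 * ν 2 * Real.sqrt (π/5))^2 = 4 * (π/5) * ν 2 ^2 := by
        rw [mul_pow, mul_pow, Real.sq_sqrt (by positivity)]; ring
      rw [e1]
      have hν2 : ν 2 = - ν 0 - ν 1 := by linarith
      rw [hν2] at hmax0 hmax1
      have hP : 0 ≤ ν 1 * (2 * ν 0 + ν 1) := by nlinarith [hmax0]
      have hQ' : 0 ≤ ν 0 * (ν 0 + 2 * ν 1) := by nlinarith [hmax1]
      have hab : 0 ≤ ν 0 * ν 1 := by nlinarith [mul_nonneg hP hQ', hP, hQ']
      have hle : ν 0^2 + ν 1^2 + ν 2^2 ≤ 2 * ν 2^2 := by rw [hν2]; nlinarith [hab]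
      nlinarith [hsum, hle, hπ]
    · intro x hx
      rw [quadform, hform]
      have hdiag : x ⬝ᵥ (diagonal ν).mulVec x = ν 0 * x 0^2 + ν 1 * x 1^2 + ν 2 * x 2^2 := by
        simp [dotProduct, Matrix.mulVec, Fin.sum_univ_three, Matrix.diagonal,
          Matrix.vecHead, Matrix.vecTail]
        ring
      rw [hdiag, Y20, Y22]
      linear_combination (- 2 * ν 2 * (3 * x 2^2 - 1)) * h1
        + (- 2 * (ν 0 - ν 1) * (x 0^2 - x 1^2)) * h2
        + (- ν 2/2) * hx + ((x 0^2 + x 1^2)/2) * htr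

/-- **Normal form of a normalized second-shell vorticity.**
If `Q` is a real symmetric traceless `3×3` matrix and `ω(x) = xᵀQx` is `L²`-normalized on the
unit sphere, then there is a rotation `R ∈ SO(3)` and `A, B` with `A² + B² = 1`, `3/7 ≤ A²`
such that `ω(Rx) = A Y_{2,0}(x) + B Y_{2,2}(x)` for all `x ∈ S²`. -/
theorem stmt2 (Q : Matrix (Fin 3) (Fin 3) ℝ) (hsym : Qᵀ = Q) (htrace : Q.trace = 0)
    (hnorm : (∫ φ in (0:ℝ)..(2 * π), ∫ θ in (0:ℝ)..π,
      ((sphPoint θ φ) ⬝ᵥ Q.mulVec (sphPoint θ φ)) ^ 2 * Real.sin θ) = 1) :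
    ∃ R : Matrix (Fin 3) (Fin 3) ℝ, Rᵀ * R = 1 ∧ R.det = 1 ∧
      ∃ A B : ℝ, A ^ 2 + B ^ 2 = 1 ∧ 3 / 7 ≤ A ^ 2 ∧
        ∀ x : Fin 3 → ℝ, (x 0) ^ 2 + (x 1) ^ 2 + (x 2) ^ 2 = 1 →
          (R.mulVec x) ⬝ᵥ Q.mulVec (R.mulVec x) = A * Y20 x + B * Y22 x := by
  have hπ := Real.pi_pos
  -- Part 1: compute the normalization integral in terms of the entries of Q.
  have e10 : Q 1 0 = Q 0 1 := by conv_lhs => rw [← hsym, Matrix.transpose_apply]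
  have e20 : Q 2 0 = Q 0 2 := by conv_lhs => rw [← hsym, Matrix.transpose_apply]
  have e21 : Q 2 1 = Q 1 2 := by conv_lhs => rw [← hsym, Matrix.transpose_apply]
  have htr : Q 0 0 + Q 1 1 + Q 2 2 = 0 := by
    simpa [Matrix.trace, Fin.sum_univ_three] using htrace
  have hT : 8*π*(Q 0 0^2 + Q 1 1^2 + Q 2 2^2 + 2*(Q 0 1^2 + Q 0 2^2 + Q 1 2^2)) = 15 := by
    set a := Q 0 0; set b := Q 1 1; set c := Q 2 2
    set d := Q 0 1; set e := Q 0 2; set f := Q 1 2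
    have hinner : ∀ φ : ℝ, (∫ θ in (0:ℝ)..π,
        ((sphPoint θ φ) ⬝ᵥ Q.mulVec (sphPoint θ φ)) ^ 2 * Real.sin θ)
        = 16/15 * (a * cos φ ^ 2 + b * sin φ ^ 2 + 2*d*(cos φ * sin φ)) ^ 2
          + 4/15 * (2*c*(a * cos φ ^ 2 + b * sin φ ^ 2 + 2*d*(cos φ * sin φ))
              + (2*e*cos φ + 2*f*sin φ) ^ 2)
          + 2/5 * c ^ 2 := by
      intro φ
      rw [show (fun θ => ((sphPoint θ φ) ⬝ᵥ Q.mulVec (sphPoint θ φ)) ^ 2 * Real.sin θ)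
          = fun θ => ((a * cos φ ^ 2 + b * sin φ ^ 2 + 2*d*(cos φ * sin φ)) ^ 2) * sin θ ^ 5
            + (2*(a * cos φ ^ 2 + b * sin φ ^ 2 + 2*d*(cos φ * sin φ))
                * (2*e*cos φ + 2*f*sin φ)) * (sin θ ^ 4 * cos θ)
            + (2*c*(a * cos φ ^ 2 + b * sin φ ^ 2 + 2*d*(cos φ * sin φ))
                + (2*e*cos φ + 2*f*sin φ) ^ 2) * (sin θ ^ 3 * cos θ ^ 2)
            + (2*c*(2*e*cos φ + 2*f*sin φ)) * (sin θ ^ 2 * cos θ ^ 3)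
            + (c ^ 2) * (sin θ * cos θ ^ 4) from by
        funext θ
        simp only [sphPoint, dotProduct, Matrix.mulVec, Fin.sum_univ_three,
          Matrix.cons_val_zero, Matrix.cons_val_one, Matrix.head_cons, Matrix.cons_val_two,
          Matrix.tail_cons]
        rw [e10, e20, e21]
        ring]
      rw [inner_int]
    rw [intervalIntegral.integral_congr (g := fun φ : ℝ =>
        (16/15*a^2) * cos φ ^ 4 + (16/15*b^2) * sin φ ^ 4
        + (16/15*(2*a*b+4*d^2)) * (cos φ ^ 2 * sin φ ^ 2)
        + (16/15*(4*a*d)) * (cos φ ^ 3 * sin φ) + (16/15*(4*b*d)) * (cos φ * sin φ ^ 3)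
        + (8/15*c*a + 16/15*e^2) * cos φ ^ 2 + (8/15*c*b + 16/15*f^2) * sin φ ^ 2
        + (16/15*c*d + 32/15*e*f) * (cos φ * sin φ) + (2/5*c^2))
        (fun φ _ => by rw [hinner φ]; ring)] at hnorm
    rw [outer_int] at hnorm
    linear_combination 15 * hnorm - 4*π*(a+b+c)*htr
  -- Part 2: spectral decomposition.
  have hQher : Q.IsHermitian := by
    rwa [Matrix.IsHermitian, Matrix.conjTranspose_eq_transpose_of_trivial]
  set U : Matrix (Fin 3) (Fin 3) ℝ := (hQher.eigenvectorUnitary : Matrix (Fin 3) (Fin 3) ℝ) with hUdef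
  set μ : Fin 3 → ℝ := hQher.eigenvalues with hμdef
  have hUU : Uᵀ * U = 1 := by
    have := Matrix.mem_unitaryGroup_iff'.mp hQher.eigenvectorUnitary.2
    rwa [Matrix.star_eq_conjTranspose, Matrix.conjTranspose_eq_transpose_of_trivial] at this
  have hQdec : Q = U * diagonal μ * Uᵀ := by
    have h := hQher.spectral_theorem
    rwa [Unitary.conjStarAlgAut_apply, Matrix.star_eq_conjTranspose, Matrix.conjTranspose_eq_transpose_of_trivial,
      RCLike.ofReal_real_eq_id, Function.id_comp] at h
  have hUQU : Uᵀ * Q * U = diagonal μ := by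
    rw [hQdec]
    calc Uᵀ * (U * diagonal μ * Uᵀ) * U = (Uᵀ * U) * diagonal μ * (Uᵀ * U) := by
          simp only [Matrix.mul_assoc]
      _ = diagonal μ := by rw [hUU, Matrix.one_mul, Matrix.mul_one]
  -- trace identities
  have htrμ : μ 0 + μ 1 + μ 2 = 0 := by
    have h : Q.trace = μ 0 + μ 1 + μ 2 := by
      rw [hQdec, Matrix.trace_mul_cycle, hUU, Matrix.one_mul, Matrix.trace_diagonal,
        Fin.sum_univ_three]
    rw [← h, htrace]
  have hsumμ : 8*π*(μ 0^2 + μ 1^2 + μ 2^2) = 15 := by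
    have h2 : Q * Q = U * (diagonal μ * diagonal μ) * Uᵀ := by
      rw [hQdec]
      calc U * diagonal μ * Uᵀ * (U * diagonal μ * Uᵀ)
          = U * diagonal μ * (Uᵀ * U) * diagonal μ * Uᵀ := by
            simp only [Matrix.mul_assoc]
        _ = U * (diagonal μ * diagonal μ) * Uᵀ := by
            rw [hUU]; simp only [Matrix.mul_one, Matrix.mul_assoc]
    have h3 : (Q*Q).trace = μ 0^2 + μ 1^2 + μ 2^2 := by
      rw [h2, Matrix.trace_mul_cycle, hUU, Matrix.one_mul,
        Matrix.diagonal_mul_diagonal, Matrix.trace_diagonal, Fin.sum_univ_three]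
      ring
    have h4 : (Q*Q).trace = Q 0 0^2 + Q 1 1^2 + Q 2 2^2 + 2*(Q 0 1^2 + Q 0 2^2 + Q 1 2^2) := by
      simp [Matrix.trace, Matrix.mul_apply, Fin.sum_univ_three, Matrix.diag]
      rw [e10, e20, e21]
      ring
    rw [← h3, h4]
    exact hT
  -- Part 3: choose the eigenvalue of largest absolute value and permute it to slot 2.
  have main : ∀ (E : Matrix (Fin 3) (Fin 3) ℝ) (ν : Fin 3 → ℝ),
      Eᵀ * E = 1 → Eᵀ * diagonal μ * E = diagonal ν →
      ν 0 + ν 1 + ν 2 = 0 → 8*π*(ν 0^2 + ν 1^2 + ν 2^2) = 15 →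
      ν 0^2 ≤ ν 2^2 → ν 1^2 ≤ ν 2^2 →
      ∃ R : Matrix (Fin 3) (Fin 3) ℝ, Rᵀ * R = 1 ∧ R.det = 1 ∧
        ∃ A B : ℝ, A ^ 2 + B ^ 2 = 1 ∧ 3 / 7 ≤ A ^ 2 ∧
          ∀ x : Fin 3 → ℝ, (x 0) ^ 2 + (x 1) ^ 2 + (x 2) ^ 2 = 1 →
            (R.mulVec x) ⬝ᵥ Q.mulVec (R.mulVec x) = A * Y20 x + B * Y22 x := by
    intro E ν hE hED h1 h2 h3 h4
    apply core Q (U * E) ν _ _ h1 h2 h3 h4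
    · rw [Matrix.transpose_mul, Matrix.mul_assoc, ← Matrix.mul_assoc Uᵀ, hUU,
        Matrix.one_mul, hE]
    · have hstep : (U * E)ᵀ * Q * (U * E) = Eᵀ * (Uᵀ * Q * U) * E := by
        rw [Matrix.transpose_mul]; simp only [Matrix.mul_assoc]
      rw [hstep, hUQU, hED]
  rcases le_total (μ 0 ^ 2) (μ 2 ^ 2) with h02 | h02
  · rcases le_total (μ 1 ^ 2) (μ 2 ^ 2) with h12 | h12
    · -- max at 2 : E = 1
      apply main 1 μ
      · simp
      · simp
      · exact htrμ
      · exact hsumμ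
      · exact h02
      · exact h12
    · -- max at 1 : swap 1 and 2
      apply main !![1,0,0;0,0,1;0,1,0] ![μ 0, μ 2, μ 1]
      · ext i j
        fin_cases i <;> fin_cases j <;>
          simp [Matrix.mul_apply, Fin.sum_univ_three, Matrix.one_apply,
            Matrix.vecHead, Matrix.vecTail]
      · ext i j
        fin_cases i <;> fin_cases j <;>
          simp [Matrix.mul_apply, Fin.sum_univ_three, Matrix.diagonal,
            Matrix.vecHead, Matrix.vecTail]
      · simp; linarith
      · simp; linarith [hsumμ]
      · simpa using le_trans h02 h12
      · simpa using h12
  · rcases le_total (μ 1 ^ 2) (μ 0 ^ 2) with h10 | h10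
    · -- max at 0 : swap 0 and 2
      apply main !![0,0,1;0,1,0;1,0,0] ![μ 2, μ 1, μ 0]
      · ext i j
        fin_cases i <;> fin_cases j <;>
          simp [Matrix.mul_apply, Fin.sum_univ_three, Matrix.one_apply,
            Matrix.vecHead, Matrix.vecTail]
      · ext i j
        fin_cases i <;> fin_cases j <;>
          simp [Matrix.mul_apply, Fin.sum_univ_three, Matrix.diagonal,
            Matrix.vecHead, Matrix.vecTail]
      · simp; linarith
      · simp; linarith [hsumμ]
      · simpa using h02
      · simpa using h10
    · -- max at 1 : swap 1 and 2
      apply main !![1,0,0;0,0,1;0,1,0] ![μ 0, μ 2, μ 1]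
      · ext i j
        fin_cases i <;> fin_cases j <;>
          simp [Matrix.mul_apply, Fin.sum_univ_three, Matrix.one_apply,
            Matrix.vecHead, Matrix.vecTail]
      · ext i j
        fin_cases i <;> fin_cases j <;>
          simp [Matrix.mul_apply, Fin.sum_univ_three, Matrix.diagonal,
            Matrix.vecHead, Matrix.vecTail]
      · simp; linarith
      · simp; linarith [hsumμ]
      · simpa using h10
      · simpa using le_trans h02 h10
end

section
/- For all real numbers A and B, the surface integral over the unit sphere of the cube of A·Y_{2,0} + B·Y_{2,2} satisfies ∫_{S²} (A·Y_{2,0} + B·Y_{2,2})³ dS = (1/7)·√(5/π)·A·(A² − 3B²). -/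
open Real

lemma inner_int_s7 (α β : ℝ) :
    (∫ θ in (0:ℝ)..π,
      (α * (3 * (Real.cos θ)^2 - 1) + β * (Real.sin θ)^2)^3 * Real.sin θ)
    = 32/35*α^3 + 16/7*α^2*β - 64/35*α*β^2 + 32/35*β^3 := by
  have key : ∀ θ ∈ Set.uIcc (0:ℝ) π,
      HasDerivAt (fun θ : ℝ =>
        -((3*α-β)^3 * (Real.cos θ)^7/7 + 3*(3*α-β)^2*(β-α) * (Real.cos θ)^5/5
          + (3*α-β)*(β-α)^2 * (Real.cos θ)^3 + (β-α)^3 * Real.cos θ))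
        ((α * (3 * (Real.cos θ)^2 - 1) + β * (Real.sin θ)^2)^3 * Real.sin θ) θ := by
    intro θ _
    have hc := Real.hasDerivAt_cos θ
    have h := ((((((hc.pow 7).const_mul ((3*α-β)^3)).div_const 7).add
      ((((hc.pow 5).const_mul (3*(3*α-β)^2*(β-α))).div_const 5))).add
      ((hc.pow 3).const_mul ((3*α-β)*(β-α)^2))).add
      (hc.const_mul ((β-α)^3))).neg
    convert h using 1
    · rfl
    · rfl
    · rfl
    rw [Real.sin_sq]
    ring
  rw [intervalIntegral.integral_eq_sub_of_hasDerivAt key (by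
    apply Continuous.intervalIntegrable; fun_prop)]
  norm_num [Real.cos_pi, Real.cos_zero]
  ring

lemma outer_int_s7 (k0 k1 k2 k3 : ℝ) :
    (∫ φ in (0:ℝ)..(2*π),
      (k0 + k1 * Real.cos (2*φ) + k2 * (Real.cos (2*φ))^2 + k3 * (Real.cos (2*φ))^3))
    = 2*π*k0 + π*k2 := by
  have key : ∀ φ ∈ Set.uIcc (0:ℝ) (2*π),
      HasDerivAt (fun φ : ℝ =>
        k0*φ + k1 * Real.sin (2*φ)/2 + k2*(φ/2 + Real.sin (4*φ)/8)
          + k3*(Real.sin (2*φ)/2 - (Real.sin (2*φ))^3/6))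
        (k0 + k1 * Real.cos (2*φ) + k2 * (Real.cos (2*φ))^2 + k3 * (Real.cos (2*φ))^3)
        φ := by
    intro φ _
    have h2 : HasDerivAt (fun φ : ℝ => Real.sin (2*φ)) (Real.cos (2*φ) * 2) φ :=
      (Real.hasDerivAt_sin (2*φ)).comp φ (by simpa using (hasDerivAt_id φ).const_mul 2)
    have h4 : HasDerivAt (fun φ : ℝ => Real.sin (4*φ)) (Real.cos (4*φ) * 4) φ :=
      (Real.hasDerivAt_sin (4*φ)).comp φ (by simpa using (hasDerivAt_id φ).const_mul 4)
    have h := ((((hasDerivAt_id φ).const_mul k0).add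
        (((h2.const_mul k1).div_const 2))).add
        ((((hasDerivAt_id φ).div_const 2).add (h4.div_const 8)).const_mul k2)).add
        ((((h2.div_const 2)).sub ((h2.pow 3).div_const 6)).const_mul k3)
    convert h using 1
    · rfl
    · rfl
    · rfl
    have hc4 : Real.cos (4*φ) = 2 * (Real.cos (2*φ))^2 - 1 := by
      rw [show (4:ℝ)*φ = 2*(2*φ) by ring, Real.cos_two_mul]
    have hs2 : (Real.sin (2*φ))^2 = 1 - (Real.cos (2*φ))^2 := Real.sin_sq _
    rw [hc4]
    linear_combination (k3 * Real.cos (2*φ)) * hs2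
  rw [intervalIntegral.integral_eq_sub_of_hasDerivAt key (by
    apply Continuous.intervalIntegrable; fun_prop)]
  have s4 : Real.sin (2*(2*π)) = 0 := by
    rw [show (2:ℝ)*(2*π) = (4:ℕ)*π by push_cast; ring]; exact Real.sin_nat_mul_pi 4
  have s8 : Real.sin (4*(2*π)) = 0 := by
    rw [show (4:ℝ)*(2*π) = (8:ℕ)*π by push_cast; ring]; exact Real.sin_nat_mul_pi 8
  simp [s4, s8]
  ring

/-- **The cubic Casimir of `A Y_{2,0} + B Y_{2,2}`.**
`∫_{S²} (A Y_{2,0} + B Y_{2,2})³ dS = (1/7)√(5/π) A (A² − 3B²)`. -/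
theorem stmt7 (A B : ℝ) :
    (∫ φ in (0:ℝ)..(2 * π), ∫ θ in (0:ℝ)..π,
      (A * (Real.sqrt (5 / (16 * π)) * (3 * (Real.cos θ) ^ 2 - 1)) +
       B * (Real.sqrt (15 / (16 * π)) * (Real.sin θ) ^ 2 * Real.cos (2 * φ))) ^ 3 *
        Real.sin θ) =
    (1 / 7) * Real.sqrt (5 / π) * A * (A ^ 2 - 3 * B ^ 2) := by
  have hπ : (0:ℝ) < π := Real.pi_pos
  have ha : (Real.sqrt (5/(16*π)))^2 = 5/(16*π) := Real.sq_sqrt (by positivity)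
  have hb : (Real.sqrt (15/(16*π)))^2 = 15/(16*π) := Real.sq_sqrt (by positivity)
  have hs : Real.sqrt (5/π) = 4 * Real.sqrt (5/(16*π)) := by
    rw [show (5/π:ℝ) = 16 * (5/(16*π)) by field_simp,
      show (16:ℝ) * (5/(16*π)) = 4^2 * (5/(16*π)) by norm_num,
      Real.sqrt_mul (by positivity), Real.sqrt_sq (by norm_num)]
  set a := Real.sqrt (5/(16*π)) with hadef
  set b := Real.sqrt (15/(16*π)) with hbdef
  have step : (∫ φ in (0:ℝ)..(2 * π), ∫ θ in (0:ℝ)..π,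
      (A * (a * (3 * (Real.cos θ) ^ 2 - 1)) +
       B * (b * (Real.sin θ) ^ 2 * Real.cos (2 * φ))) ^ 3 * Real.sin θ)
      = ∫ φ in (0:ℝ)..(2*π),
        (32/35*(A*a)^3 + (16/7*(A*a)^2*(B*b)) * Real.cos (2*φ)
          + (-(64/35)*(A*a)*(B*b)^2) * (Real.cos (2*φ))^2
          + (32/35*(B*b)^3) * (Real.cos (2*φ))^3) := by
    refine intervalIntegral.integral_congr fun φ _ => ?_
    rw [show (∫ θ in (0:ℝ)..π,
        (A * (a * (3 * (Real.cos θ) ^ 2 - 1)) +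
         B * (b * (Real.sin θ) ^ 2 * Real.cos (2 * φ))) ^ 3 * Real.sin θ)
        = ∫ θ in (0:ℝ)..π,
        ((A*a) * (3 * (Real.cos θ)^2 - 1) + (B*b*Real.cos (2*φ)) * (Real.sin θ)^2)^3
          * Real.sin θ from intervalIntegral.integral_congr fun θ _ => by ring_nf]
    rw [inner_int_s7]
    ring
  have ha2 : π * a^2 = 5/16 := by rw [ha]; field_simp
  have hb2 : π * b^2 = 15/16 := by rw [hb]; field_simp
  rw [step, outer_int_s7, hs]
  linear_combination (64/35*A^3*a) * ha2 - (64/35*A*a*B^2) * hb2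
end
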